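/- Every symmetric positive definite matrix K with K_{ij} < 0 for all edges (i,j) ∈ E and K_{ij} = 0 for non-edges admits a unique upper triangular Cholesky factor Φ with positive diagonal satisfying: Φ_{ii} > 0, Φ_{ij} = -(1/Φ_{ii}) Σ_{d<i} Φ_{di}Φ_{dj} for (i,j) ∉ E, and Φ_{ij} < -(1/Φ_{ii}) Σ_{d<i} Φ_{di}Φ_{dj} for (i,j) ∈ E. -/

import Mathlib

open Matrix Finset

/-- Existence of an upper-triangular square root, from the LDL decomposition. -/
lemma cholesky_exists_aux {n : ℕ} {K : Matrix (Fin n) (Fin n) ℝ} (hK : K.PosDef) :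
    ∃ B : Matrix (Fin n) (Fin n) ℝ,
      (∀ i j : Fin n, j < i → B i j = 0) ∧ K = Bᵀ * B := by
  haveI iW : WellFoundedLT (Fin n) := inferInstance
  set A : Matrix (Fin n) (Fin n) ℝ := LDL.lowerInv hK with hA
  set d : Fin n → ℝ := LDL.diagEntries hK with hd
  haveI : Invertible A := by
    rw [hA, LDL.lowerInv_eq_gramSchmidtBasis]
    haveI := Module.Basis.invertibleToMatrix (Pi.basisFun ℝ (Fin n))
      (@InnerProductSpace.gramSchmidtBasis ℝ (Fin n → ℝ) _ (Kᵀ.toNormedAddCommGroup hK.transpose)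
        (Kᵀ.toInnerProductSpace hK.transpose.posSemidef) (Fin n) _ _ _ (Pi.basisFun ℝ (Fin n)))
    infer_instance
  set M : Matrix (Fin n) (Fin n) ℝ := A⁻¹ with hM
  -- rows of A are nonzero, hence the diagonal entries are positive
  have hrow : ∀ i, A i ≠ 0 := by
    intro i h
    have hdet : A.det = 0 := Matrix.det_eq_zero_of_row_eq_zero i (fun j => congrFun h j)
    exact ((Matrix.isUnit_iff_isUnit_det A).mp (isUnit_of_invertible A)).ne_zero hdet
  have hdpos : ∀ i, 0 < d i := by
    intro i
    have := hK.dotProduct_mulVec_pos (hrow i)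
    simpa [hd, LDL.diagEntries, PiLp.inner_apply, dotProduct, mul_comm] using this
  -- M is lower triangular
  have hMtri : ∀ i j : Fin n, i < j → M i j = 0 := by
    have hAtri : A.BlockTriangular OrderDual.toDual := by
      intro i j hij
      exact LDL.lowerInv_triangular hK hij
    have h2 := Matrix.blockTriangular_inv_of_blockTriangular hAtri
    intro i j hij
    exact h2 hij
  -- the factorization K = M * D * Mᴴ
  have hfac : M * LDL.diag hK * Mᴴ = K := by
    rw [hM, Matrix.conjTranspose_nonsing_inv, LDL.diag_eq_lowerInv_conj hK, ← hA,
      Matrix.mul_assoc A K Aᴴ, Matrix.inv_mul_cancel_left_of_invertible,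
      Matrix.mul_inv_cancel_right_of_invertible]
  refine ⟨fun i j => Real.sqrt (d i) * M j i, ?_, ?_⟩
  · intro i j hij
    show Real.sqrt (d i) * M j i = 0
    rw [hMtri j i hij, mul_zero]
  · rw [← hfac]
    ext i j
    simp only [Matrix.mul_apply, Matrix.conjTranspose_apply, Matrix.transpose_apply,
      star_trivial]
    refine Finset.sum_congr rfl (fun k _ => ?_)
    rw [Finset.sum_eq_single k (fun b _ hb => by
        have hz : LDL.diag hK b k = 0 := by
          simp [LDL.diag, Matrix.diagonal_apply, hb]
        rw [hz, mul_zero]) (by simp)]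
    have hdiagk : LDL.diag hK k k = d k := by simp [LDL.diag, hd]
    rw [hdiagk]
    have h := Real.mul_self_sqrt (hdpos k).le
    simp only [Matrix.transpose, Matrix.of_apply]
    linear_combination (M i k * M j k) * h.symm

theorem cholesky_of_truncated_cone {n : ℕ} (G : SimpleGraph (Fin n))
    (K : Matrix (Fin n) (Fin n) ℝ) (hK : K.PosDef)
    (hzero : ∀ i j, i ≠ j → ¬G.Adj i j → K i j = 0)
    (hneg : ∀ i j, G.Adj i j → K i j < 0) :
    ∃! Φ : Matrix (Fin n) (Fin n) ℝ,
      (∀ i j : Fin n, j < i → Φ i j = 0) ∧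
      (∀ i : Fin n, 0 < Φ i i) ∧
      K = Φᵀ * Φ ∧
      (∀ i j : Fin n, i < j → ¬G.Adj i j →
        Φ i j = -(1 / Φ i i) * ∑ d ∈ Finset.Iio i, Φ d i * Φ d j) ∧
      (∀ i j : Fin n, i < j → G.Adj i j →
        Φ i j < -(1 / Φ i i) * ∑ d ∈ Finset.Iio i, Φ d i * Φ d j) := by
  classical
  obtain ⟨B, hBtri, hBfact⟩ := cholesky_exists_aux hK
  -- the diagonal entries of B are nonzero
  have hBdet : B.det ≠ 0 := by
    intro h
    have : K.det = Bᵀ.det * B.det := by rw [hBfact, Matrix.det_mul]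
    rw [Matrix.det_transpose, h, mul_zero] at this
    exact hK.det_pos.ne' this
  have hBdiag : ∀ i, B i i ≠ 0 := by
    intro i
    have hdet : B.det = ∏ k, B k k :=
      Matrix.det_of_upperTriangular (fun a b hab => hBtri a b hab)
    intro h
    exact hBdet (by rw [hdet]; exact Finset.prod_eq_zero (Finset.mem_univ i) h)
  -- flip signs to make the diagonal positive
  set ε : Fin n → ℝ := fun i => if 0 < B i i then 1 else -1 with hε
  have hεsq : ∀ i, ε i * ε i = 1 := by
    intro i; by_cases h : 0 < B i i <;> simp [hε, h]
  set Φ : Matrix (Fin n) (Fin n) ℝ := fun i j => ε i * B i j with hΦ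
  have htri : ∀ i j : Fin n, j < i → Φ i j = 0 := by
    intro i j hij; simp [hΦ, hBtri i j hij]
  have hdiag : ∀ i, 0 < Φ i i := by
    intro i
    by_cases h : 0 < B i i
    · simpa [hΦ, hε, h] using h
    · have : B i i < 0 := lt_of_le_of_ne (not_lt.mp h) (hBdiag i)
      simp only [hΦ, hε, if_neg h]
      nlinarith
  have hfact : K = Φᵀ * Φ := by
    rw [hBfact]
    ext i j
    simp only [Matrix.mul_apply, Matrix.transpose_apply, hΦ]
    refine Finset.sum_congr rfl (fun k _ => ?_)
    by_cases h : 0 < B k k <;> simp [hε, h, Matrix.transpose, Matrix.of_apply]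
  -- Key identity: for any valid factor Ψ, K i j = Ψ i i * Ψ i j + ∑_{d<i} Ψ d i * Ψ d j
  have key : ∀ Ψ : Matrix (Fin n) (Fin n) ℝ, (∀ i j : Fin n, j < i → Ψ i j = 0) →
      K = Ψᵀ * Ψ → ∀ i j : Fin n,
      K i j = Ψ i i * Ψ i j + ∑ d ∈ Finset.Iio i, Ψ d i * Ψ d j := by
    intro Ψ htriΨ hfactΨ i j
    have h1 : K i j = ∑ k, Ψ k i * Ψ k j := by
      rw [hfactΨ]; simp [Matrix.mul_apply, Matrix.transpose_apply]
    rw [h1, ← Finset.sum_subset (Finset.subset_univ (Finset.Iic i))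
      (fun k _ hk => by
        rw [htriΨ k i (by simpa using hk), zero_mul]),
      ← Finset.Iio_insert, Finset.sum_insert (by simp)]
  refine ⟨Φ, ⟨htri, hdiag, hfact, ?_, ?_⟩, ?_⟩
  · -- non-edges
    intro i j hij hadj
    have hk := key Φ htri hfact i j
    rw [hzero i j (ne_of_lt hij) hadj] at hk
    have hne := (hdiag i).ne'
    field_simp
    linarith
  · -- edges
    intro i j hij hadj
    have hk := key Φ htri hfact i j
    have hlt := hneg i j hadj
    have hpos := hdiag i
    have hrhs : Φ i i * (-(1 / Φ i i) * ∑ d ∈ Finset.Iio i, Φ d i * Φ d j)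
        = -∑ d ∈ Finset.Iio i, Φ d i * Φ d j := by
      field_simp
    have hS : Φ i i * Φ i j < Φ i i * (-(1 / Φ i i) * ∑ d ∈ Finset.Iio i, Φ d i * Φ d j) := by
      rw [hrhs]; linarith
    exact (mul_lt_mul_iff_right₀ hpos).mp hS
  · -- uniqueness
    rintro Ψ ⟨htriΨ, hdiagΨ, hfactΨ, -, -⟩
    have main : ∀ m : ℕ, ∀ i : Fin n, (i : ℕ) < m → ∀ j, Ψ i j = Φ i j := by
      intro m
      induction m with
      | zero => intro i hi; omega
      | succ m IH =>
        intro i hi j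
        rcases Nat.lt_or_ge (i : ℕ) m with h | h
        · exact IH i h j
        have hi' : (i : ℕ) = m := by omega
        have IH' : ∀ d : Fin n, d < i → ∀ j, Ψ d j = Φ d j := by
          intro d hd j; exact IH d (by omega) j
        have hdiageq : Ψ i i = Φ i i := by
          have h1 := key Ψ htriΨ hfactΨ i i
          have h2 := key Φ htri hfact i i
          have hsum : ∑ d ∈ Finset.Iio i, Ψ d i * Ψ d i
              = ∑ d ∈ Finset.Iio i, Φ d i * Φ d i := by
            refine Finset.sum_congr rfl (fun d hd => ?_)
            rw [IH' d (Finset.mem_Iio.mp hd)]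
          nlinarith [hdiagΨ i, hdiag i]
        rcases lt_trichotomy j i with hj | hj | hj
        · rw [htriΨ i j hj, htri i j hj]
        · rw [hj]; exact hdiageq
        · have h1 := key Ψ htriΨ hfactΨ i j
          have h2 := key Φ htri hfact i j
          have hsum : ∑ d ∈ Finset.Iio i, Ψ d i * Ψ d j
              = ∑ d ∈ Finset.Iio i, Φ d i * Φ d j := by
            refine Finset.sum_congr rfl (fun d hd => ?_)
            rw [IH' d (Finset.mem_Iio.mp hd), IH' d (Finset.mem_Iio.mp hd)]
          have : Ψ i i * Ψ i j = Φ i i * Φ i j := by linarith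
          rw [hdiageq] at this
          exact mul_left_cancel₀ (hdiag i).ne' this
    ext i j
    exact main n i i.isLt j
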